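/- Let λ > 0, α ∈ (0,1), t ≥ 0, and u ∈ [0,1). Then exp(−λ^α t (1−u)^α) = ∑_{n=0}^∞ u^n [ ∑_{r=0}^∞ ((−1)^{r+n}/r!) λ^{α r} t^r binom(α r, n) ], where both series converge. -/

import Mathlib

open MeasureTheory

/-- Generalized binomial coefficient `binom(x, n) = (∏_{j=0}^{n-1} (x - j)) / n!`. -/
noncomputable def gbinom (x : ℝ) (n : ℕ) : ℝ :=
  (∏ j ∈ Finset.range n, (x - (j : ℝ))) / (n.factorial : ℝ)

/-- `β_r(s₁, …, s_r) = ∑_{j=1}^r α(s_j)`. -/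
noncomputable def betaSum (α : ℝ → ℝ) {r : ℕ} (s : Fin r → ℝ) : ℝ :=
  ∑ j, α (s j)

open Complex in
lemma iteratedDeriv_one_add_cpow (x : ℂ) (n : ℕ) {w : ℂ} (hw : 1 + w ∈ Complex.slitPlane) :
    iteratedDeriv n (fun z => (1 + z) ^ x) w
      = (∏ j ∈ Finset.range n, (x - (j : ℂ))) * (1 + w) ^ (x - n) := by
  induction n generalizing w with
  | zero => simp
  | succ n ih =>
    rw [iteratedDeriv_succ]
    have hU : IsOpen {z : ℂ | 1 + z ∈ Complex.slitPlane} :=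
      Complex.isOpen_slitPlane.preimage (by fun_prop)
    have hev : iteratedDeriv n (fun z => (1 + z) ^ x)
        =ᶠ[nhds w] fun z => (∏ j ∈ Finset.range n, (x - (j : ℂ))) * (1 + z) ^ (x - n) := by
      filter_upwards [hU.mem_nhds hw] with z hz using ih hz
    rw [hev.deriv_eq]
    have hd : HasDerivAt (fun z : ℂ => (1 + z) ^ (x - n))
        ((x - n) * (1 + w) ^ (x - n - 1) * 1) w :=
      HasDerivAt.cpow_const ((hasDerivAt_id w).const_add 1) hw
    rw [deriv_const_mul _ hd.differentiableAt, hd.deriv]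
    rw [Finset.prod_range_succ]
    push_cast
    rw [show x - ((n:ℂ)+1) = x - n - 1 by ring]
    ring

/-- The real binomial series. -/
lemma hasSum_one_add_rpow (x : ℝ) {v : ℝ} (hv : |v| < 1) :
    HasSum (fun n : ℕ => gbinom x n * v ^ n) ((1 + v) ^ x) := by
  have h1v : (0:ℝ) < 1 + v := by cases abs_lt.mp hv; linarith
  have hdiff : DifferentiableOn ℂ (fun z : ℂ => (1 + z) ^ (x:ℂ)) (Metric.ball 0 1) := by
    intro z hz
    have hz1 : 1 + z ∈ Complex.slitPlane := by
      rw [Complex.mem_slitPlane_iff]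
      left
      have : ‖z‖ < 1 := by simpa using hz
      have := abs_le.mp (Complex.abs_re_le_norm z)
      simp only [Complex.add_re, Complex.one_re]
      linarith
    exact (((differentiable_id.const_add 1) z).cpow (differentiableAt_const _) hz1).differentiableWithinAt
  have hmem : (v:ℂ) ∈ Metric.ball (0:ℂ) 1 := by
    simp [Complex.norm_real, hv]
  have H := Complex.hasSum_taylorSeries_on_ball hdiff hmem
  rw [← Complex.hasSum_ofReal]
  convert H using 2 with n
  · rfl
  · rw [iteratedDeriv_one_add_cpow x n (by simp [Complex.mem_slitPlane_iff])]
    simp only [gbinom, sub_zero, Complex.one_cpow, mul_one, add_zero]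
    push_cast
    field_simp
    ring
  · rw [show ((1:ℂ) + v) = ((1 + v : ℝ) : ℂ) by push_cast; ring,
      ← Complex.ofReal_cpow h1v.le]

lemma gbinom_neg_mul (y w : ℝ) (n : ℕ) :
    gbinom (-y) n * (-w) ^ n = (∏ j ∈ Finset.range n, (y + j)) / (n.factorial : ℝ) * w ^ n := by
  have hp : ∏ j ∈ Finset.range n, (-y - (j:ℝ)) =
      (-1) ^ n * ∏ j ∈ Finset.range n, (y + (j:ℝ)) := by
    rw [show ((-1:ℝ)) ^ n = ∏ _j ∈ Finset.range n, (-1:ℝ) by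
        rw [Finset.prod_const, Finset.card_range], ← Finset.prod_mul_distrib]
    exact Finset.prod_congr rfl fun j _ => by ring
  have h1 : ((-1:ℝ)) ^ n * ((-1:ℝ)) ^ n = 1 := by
    rw [← mul_pow]; norm_num
  rw [gbinom, hp, neg_pow]
  field_simp
  ring_nf
  rw [mul_comm n 2, pow_mul]
  norm_num

/-- Abs bound for the generalized binomial coefficient with nonneg argument. -/
lemma abs_gbinom_le {x : ℝ} (hx : 0 ≤ x) (n : ℕ) :
    |gbinom x n| ≤ (∏ j ∈ Finset.range n, (x + j)) / (n.factorial : ℝ) := by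
  rw [gbinom, abs_div, abs_of_nonneg (by positivity : (0:ℝ) ≤ (n.factorial:ℝ))]
  gcongr
  rw [Finset.abs_prod]
  apply Finset.prod_le_prod (fun j _ => abs_nonneg _)
  intro j _
  calc |x - (j:ℝ)| ≤ |x| + |(j:ℝ)| := abs_sub _ _
    _ = x + j := by rw [abs_of_nonneg hx, abs_of_nonneg (Nat.cast_nonneg j)]

lemma real_exp_hasSum (y : ℝ) : HasSum (fun r : ℕ => y ^ r / (r.factorial : ℝ)) (Real.exp y) := by
  have := NormedSpace.exp_series_hasSum_exp' (𝕂 := ℝ) y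
  simpa [Real.exp_eq_exp_ℝ, smul_eq_mul, div_eq_inv_mul] using this

lemma summable_aux {C : ℝ} (hC : 0 ≤ C) (n : ℕ) :
    Summable (fun r : ℕ => C ^ r * ((r + n : ℕ) : ℝ) ^ n / (r.factorial : ℝ)) := by
  have hg : Summable (fun r : ℕ => (2:ℝ) ^ n * ((2 * C) ^ r / (r.factorial : ℝ))) :=
    (Real.summable_pow_div_factorial (2 * C)).mul_left _
  apply Summable.of_norm_bounded_eventually_nat hg
  have h2 : Filter.Tendsto (fun r : ℕ => ((r:ℝ)) ^ n / 2 ^ r) Filter.atTop (nhds 0) :=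
    tendsto_pow_const_div_const_pow_of_one_lt n one_lt_two
  have h3 := h2.comp (Filter.tendsto_add_atTop_nat n)
  filter_upwards [h3.eventually_lt_const (by norm_num : (0:ℝ) < 1)] with r hr
  have hpow : ((r + n : ℕ) : ℝ) ^ n ≤ 2 ^ (r + n) := by
    have h2p : (0:ℝ) < 2 ^ (r + n) := by positivity
    have := (div_lt_one h2p).mp hr
    push_cast at this ⊢
    linarith
  have : ‖C ^ r * ((r + n : ℕ) : ℝ) ^ n / (r.factorial : ℝ)‖
      = C ^ r * ((r + n : ℕ) : ℝ) ^ n / (r.factorial : ℝ) := by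
    rw [Real.norm_eq_abs, abs_of_nonneg (by positivity)]
  rw [this, mul_div_assoc', div_le_div_iff_of_pos_right (by positivity : (0:ℝ) < (r.factorial:ℝ))]
  calc C ^ r * ((r + n : ℕ) : ℝ) ^ n ≤ C ^ r * (2 ^ (r + n)) := by gcongr
    _ = 2 ^ n * (2 * C) ^ r := by rw [pow_add, mul_pow]; ring

set_option maxHeartbeats 1000000 in
theorem stmt_6 (lam α t u : ℝ) (hlam : 0 < lam) (hα : α ∈ Set.Ioo (0 : ℝ) 1)
    (ht : 0 ≤ t) (hu : u ∈ Set.Ico (0 : ℝ) 1) :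
    (∀ n : ℕ, Summable (fun r : ℕ =>
        ((-1 : ℝ) ^ (r + n) / (r.factorial : ℝ)) * lam ^ (α * r) * t ^ r *
          gbinom (α * r) n)) ∧
      HasSum
        (fun n : ℕ => u ^ n *
          ∑' r : ℕ, ((-1 : ℝ) ^ (r + n) / (r.factorial : ℝ)) * lam ^ (α * r) * t ^ r *
            gbinom (α * r) n)
        (Real.exp (-(lam ^ α * t * (1 - u) ^ α))) := by
  obtain ⟨hα0, hα1⟩ := hα
  obtain ⟨hu0, hu1⟩ := hu
  have h1u : (0:ℝ) < 1 - u := by linarith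
  set a : ℕ → ℕ → ℝ := fun r n =>
    ((-1 : ℝ) ^ (r + n) / (r.factorial : ℝ)) * lam ^ (α * r) * t ^ r * gbinom (α * r) n with ha
  set C := lam ^ α with hCdef
  have hC0 : 0 < C := Real.rpow_pos_of_pos hlam α
  have hCr : ∀ r : ℕ, lam ^ (α * (r:ℝ)) = C ^ r := fun r => by
    rw [Real.rpow_mul hlam.le, Real.rpow_natCast]
  have habs : ∀ r n, |a r n| ≤ (C * t) ^ r / (r.factorial : ℝ) *
      ((∏ j ∈ Finset.range n, (α * r + j)) / (n.factorial : ℝ)) := by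
    intro r n
    have : |a r n| = (C * t) ^ r / (r.factorial : ℝ) * |gbinom (α * r) n| := by
      rw [ha]
      simp only [abs_mul, abs_div, abs_pow, abs_neg, abs_one, one_pow, one_div,
        Nat.abs_cast, hCr]
      rw [abs_of_nonneg hC0.le, abs_of_nonneg ht, mul_pow]
      ring
    rw [this]
    gcongr
    exact abs_gbinom_le (by positivity) n
  -- Part 1 : summability of each column
  have part1 : ∀ n : ℕ, Summable (fun r : ℕ => a r n) := by
    intro n
    have hmaj : Summable (fun r : ℕ =>
        (1 / (n.factorial : ℝ)) * ((C * t) ^ r * ((r + n : ℕ) : ℝ) ^ n / (r.factorial : ℝ))) :=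
      (summable_aux (by positivity) n).mul_left _
    apply Summable.of_norm_bounded hmaj
    intro r
    rw [Real.norm_eq_abs]
    refine (habs r n).trans ?_
    have hprod : ∏ j ∈ Finset.range n, (α * r + (j:ℝ)) ≤ ((r + n : ℕ) : ℝ) ^ n := by
      rw [show (((r + n : ℕ)) : ℝ) ^ n = ∏ _j ∈ Finset.range n, ((r + n : ℕ) : ℝ) by
        rw [Finset.prod_const, Finset.card_range]]
      apply Finset.prod_le_prod (fun j _ => by positivity)
      intro j hj
      have hjn : (j:ℝ) ≤ (n:ℝ) := by exact_mod_cast (Finset.mem_range.mp hj).le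
      have har : α * r ≤ (r:ℝ) := by nlinarith [Nat.cast_nonneg (α := ℝ) r]
      push_cast
      linarith
    have heq : 1 / (n.factorial:ℝ) * ((C * t) ^ r * ((r + n : ℕ) : ℝ) ^ n / (r.factorial:ℝ))
        = (C * t) ^ r / (r.factorial:ℝ) * (((r + n : ℕ) : ℝ) ^ n / (n.factorial:ℝ)) := by ring
    rw [heq]
    gcongr
  refine ⟨part1, ?_⟩
  have hvu : |(-u)| < 1 := by rw [abs_neg, abs_of_nonneg hu0]; exact hu1
  set c : ℕ × ℕ → ℝ := fun p =>
    (C * t) ^ p.1 / (p.1.factorial : ℝ) *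
      ((∏ j ∈ Finset.range p.2, (α * p.1 + (j:ℝ))) / (p.2.factorial : ℝ) * u ^ p.2) with hc
  have hrowsum : ∀ r : ℕ, HasSum
      (fun n => (∏ j ∈ Finset.range n, (α * r + (j:ℝ))) / (n.factorial : ℝ) * u ^ n)
      ((1 - u) ^ (-(α * (r:ℝ)))) := by
    intro r
    have h := hasSum_one_add_rpow (-(α * (r:ℝ))) hvu
    have h2 : (fun n : ℕ => gbinom (-(α * (r:ℝ))) n * (-u) ^ n)
        = fun n => (∏ j ∈ Finset.range n, (α * r + (j:ℝ))) / (n.factorial : ℝ) * u ^ n := by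
      funext n; exact gbinom_neg_mul (α * r) u n
    rw [h2] at h
    simpa [sub_eq_add_neg] using h
  have hD : ∀ r : ℕ, (1 - u) ^ (-(α * (r:ℝ))) = ((1 - u) ^ (-α)) ^ r := by
    intro r
    rw [show -(α * (r:ℝ)) = (-α) * r by ring, Real.rpow_mul h1u.le, Real.rpow_natCast]
  have hE : ∀ r : ℕ, (1 - u) ^ (α * (r:ℝ)) = ((1 - u) ^ α) ^ r := by
    intro r
    rw [Real.rpow_mul h1u.le, Real.rpow_natCast]
  have hc0 : 0 ≤ c := by
    intro p
    have : (0:ℝ) ≤ ∏ j ∈ Finset.range p.2, (α * p.1 + (j:ℝ)) :=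
      Finset.prod_nonneg fun j _ =>
        add_nonneg (mul_nonneg hα0.le (Nat.cast_nonneg _)) (Nat.cast_nonneg j)
    simp only [hc]
    positivity
  have hcsum : Summable c := by
    rw [summable_prod_of_nonneg hc0]
    constructor
    · intro r
      refine (((hrowsum r).summable.mul_left ((C * t) ^ r / (r.factorial : ℝ))).congr ?_)
      intro n
      simp only [hc]
    have hrow : ∀ r : ℕ, ∑' n, c (r, n)
        = (C * t * (1 - u) ^ (-α)) ^ r / (r.factorial : ℝ) := by
      intro r
      simp only [hc]
      rw [tsum_mul_left, (hrowsum r).tsum_eq, hD r, mul_pow, mul_pow]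
      ring
    exact (real_exp_hasSum (C * t * (1 - u) ^ (-α))).summable.congr fun r => (hrow r).symm
  set G : ℕ × ℕ → ℝ := fun p => u ^ p.2 * a p.1 p.2 with hGdef
  have hG : Summable G := by
    apply Summable.of_norm_bounded hcsum
    rintro ⟨r, n⟩
    rw [Real.norm_eq_abs]
    simp only [hGdef]
    rw [abs_mul, abs_pow, abs_of_nonneg hu0]
    calc u ^ n * |a r n|
        ≤ u ^ n * ((C * t) ^ r / (r.factorial : ℝ) *
            ((∏ j ∈ Finset.range n, (α * r + (j:ℝ))) / (n.factorial : ℝ))) :=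
          mul_le_mul_of_nonneg_left (habs r n) (by positivity)
      _ = c (r, n) := by simp only [hc]; ring
  set T : ℝ := Real.exp (-(C * t * (1 - u) ^ α)) with hT
  have hfib : ∀ r : ℕ, HasSum (fun n => G (r, n))
      ((-(C * t * (1 - u) ^ α)) ^ r / (r.factorial : ℝ)) := by
    intro r
    have hb := (hasSum_one_add_rpow (α * (r:ℝ)) hvu).mul_left
      ((-1 : ℝ) ^ r * (C * t) ^ r / (r.factorial : ℝ))
    have heq : (fun n : ℕ => (-1 : ℝ) ^ r * (C * t) ^ r / (r.factorial : ℝ) *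
        (gbinom (α * (r:ℝ)) n * (-u) ^ n)) = fun n => G (r, n) := by
      funext n
      simp only [hGdef, ha]
      rw [hCr r, pow_add, neg_pow u n, mul_pow]
      ring
    have hval : (-1 : ℝ) ^ r * (C * t) ^ r / (r.factorial : ℝ) * (1 + -u) ^ (α * (r:ℝ))
        = (-(C * t * (1 - u) ^ α)) ^ r / (r.factorial : ℝ) := by
      rw [show (1:ℝ) + -u = 1 - u by ring, hE r,
        show -(C * t * (1 - u) ^ α) = (-1) * (C * t) * ((1 - u) ^ α) by ring,
        mul_pow, mul_pow]
      ring
    rw [heq, hval] at hb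
    exact hb
  have hgexp : HasSum (fun r : ℕ => (-(C * t * (1 - u) ^ α)) ^ r / (r.factorial : ℝ)) T :=
    real_exp_hasSum _
  have hGT : HasSum G T := by
    have h1 := hG.hasSum
    have h2 := h1.prod_fiberwise hfib
    rwa [h2.unique hgexp] at h1
  have hGT' : HasSum (fun p : ℕ × ℕ => G (p.2, p.1)) T :=
    ((Equiv.prodComm ℕ ℕ).hasSum_iff).mpr hGT
  have hfinal := hGT'.prod_fiberwise (g := fun n => u ^ n * ∑' r, a r n)
    (fun n => ((part1 n).hasSum.mul_left (u ^ n)))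
  exact hfinal
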